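/- arXiv:1406.2115 — 2 statements merged into one kernel-verified Lean document; each statement's English description precedes it below -/
import Mathlib

section
/- Let Y = (Y¹,…,Yᵐ) be an exchangeable random vector in ℝᵐ and μ a probability measure on ℝ, all with finite p-th moments, p ≥ 1. Suppose m = k·n for positive integers k, n. Then (1/2^{p−1})·E[W_p^p(μ̂_Y, μ)] ≤ W_p^p(Law(Y¹,…,Yⁿ), μ^{⊗n}) + ε_{n,p}(μ), where μ̂_Y = (1/m)∑ⱼ δ_{Yʲ} is the empirical measure of Y, Law(Y¹,…,Yⁿ) is the joint law of the first n components, and ε_{n,p}(μ) = E[W_p^p((1/n)∑ᵢ δ_{Zⁱ}, μ)] with Z¹,…,Zⁿ i.i.d. with law μ. -/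
open MeasureTheory ENNReal

/-- `W_p^p` on `P(ℝ)` with cost `|x-y|^p`: infimum over couplings. -/
noncomputable def WppR (p : ℝ) (μ ν : Measure ℝ) : ℝ≥0∞ :=
  ⨅ (π : Measure (ℝ × ℝ)) (_ : π.map Prod.fst = μ ∧ π.map Prod.snd = ν),
    ∫⁻ z, ENNReal.ofReal (|z.1 - z.2| ^ p) ∂π

/-- `W_p^p` on `P(ℝⁿ)` with respect to the normalized cost
`d_{n,p}(x,y)^p = (1/n)∑ᵢ |xⁱ-yⁱ|^p`. -/
noncomputable def WppVec (p : ℝ) (n : ℕ) (μ ν : Measure (Fin n → ℝ)) : ℝ≥0∞ :=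
  ⨅ (π : Measure ((Fin n → ℝ) × (Fin n → ℝ)))
    (_ : π.map Prod.fst = μ ∧ π.map Prod.snd = ν),
      ∫⁻ z, ENNReal.ofReal ((n : ℝ)⁻¹ * ∑ i, |z.1 i - z.2 i| ^ p) ∂π

/-- The empirical measure `(1/N)·∑ᵢ δ_{x i}`. -/
noncomputable def empMeas (N : ℕ) (x : Fin N → ℝ) : Measure ℝ :=
  (N : ℝ≥0∞)⁻¹ • ∑ i, Measure.dirac (x i)

/-- `ε_{n,p}(μ) = E[W_p^p((1/n)∑ δ_{Zⁱ}, μ)]` for `Z¹,…,Zⁿ` i.i.d. with law `μ`. -/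
noncomputable def epsNp (p : ℝ) (n : ℕ) (μ : Measure ℝ) : ℝ≥0∞ :=
  ∫⁻ z : Fin n → ℝ, WppR p (empMeas n z) μ ∂(Measure.pi fun _ : Fin n => μ)

section aux
variable {p : ℝ}

lemma measurable_cost {p : ℝ} (hp0 : 0 ≤ p) :
    Measurable fun z : ℝ × ℝ => ENNReal.ofReal (|z.1 - z.2| ^ p) :=
  (((Real.continuous_rpow_const hp0).measurable.comp
    ((measurable_fst.sub measurable_snd).abs))).ennreal_ofReal

/-- couplings -/
def Cpl (α β : Measure ℝ) : Type :=
  {π : Measure (ℝ × ℝ) // π.map Prod.fst = α ∧ π.map Prod.snd = β}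

noncomputable def cost (p : ℝ) (π : Measure (ℝ × ℝ)) : ℝ≥0∞ :=
  ∫⁻ z, ENNReal.ofReal (|z.1 - z.2| ^ p) ∂π

lemma WppR_eq_iInf (α β : Measure ℝ) : WppR p α β = ⨅ π : Cpl α β, cost p π.1 := by
  rw [WppR]
  exact iInf_subtype'

lemma prob_of_coupling {α β : Measure ℝ} [IsProbabilityMeasure α] (π : Cpl α β) :
    IsProbabilityMeasure π.1 := by
  constructor
  have := π.2.1
  calc π.1 Set.univ = π.1.map Prod.fst Set.univ := by
        rw [Measure.map_apply measurable_fst MeasurableSet.univ]; rfl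
    _ = 1 := by rw [this]; exact measure_univ

noncomputable instance Cpl.nonempty (α β : Measure ℝ) [IsProbabilityMeasure α]
    [IsProbabilityMeasure β] : Nonempty (Cpl α β) :=
  ⟨⟨α.prod β, by simp⟩⟩

lemma WppR_le {α β : Measure ℝ} (π : Measure (ℝ × ℝ))
    (h : π.map Prod.fst = α ∧ π.map Prod.snd = β) : WppR p α β ≤ cost p π := by
  rw [WppR]
  exact iInf_le_of_le π (iInf_le _ h)

lemma iInf_sum_le {ι : Type*} [Fintype ι] [DecidableEq ι] {κ : ι → Type*} [∀ i, Nonempty (κ i)]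
    (f : ∀ i, κ i → ℝ≥0∞) (s : Finset ι) :
    (⨅ g : ∀ i, κ i, ∑ i ∈ s, f i (g i)) ≤ ∑ i ∈ s, ⨅ x, f i x := by
  classical
  induction s using Finset.induction_on with
  | empty => simp
  | @insert a s ha ih =>
    rw [Finset.sum_insert ha]
    refine le_trans ?_ (add_le_add le_rfl ih)
    rw [ENNReal.add_iInf]
    refine le_iInf fun g => ?_
    rw [ENNReal.iInf_add]
    refine le_iInf fun x => ?_
    refine iInf_le_of_le (Function.update g a x) (le_of_eq ?_)
    rw [Finset.sum_insert ha, Function.update_self]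
    congr 1
    exact Finset.sum_congr rfl fun i hi => by
      rw [Function.update_of_ne (by rintro rfl; exact ha hi)]
end aux

section part2
variable {p : ℝ}

lemma map_smul_sum {ι : Type*} {α β : Type*} [MeasurableSpace α] [MeasurableSpace β]
    (s : Finset ι) (μ : ι → Measure α) (c : ℝ≥0∞) {f : α → β} (hf : Measurable f) :
    Measure.map f (c • ∑ b ∈ s, μ b) = c • ∑ b ∈ s, Measure.map f (μ b) := by
  ext t ht
  rw [Measure.map_apply hf ht]
  simp only [Measure.smul_apply, Measure.coe_finset_sum, Finset.sum_apply, smul_eq_mul]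
  congr 1
  exact Finset.sum_congr rfl fun b _ => (Measure.map_apply hf ht).symm

lemma empMeas_prob {n : ℕ} (hn : n ≠ 0) (z : Fin n → ℝ) :
    IsProbabilityMeasure ((n : ℝ≥0∞)⁻¹ • ∑ i, Measure.dirac (z i)) := by
  constructor
  simp only [Measure.smul_apply, Measure.coe_finset_sum, Finset.sum_apply, smul_eq_mul,
    measure_univ, Finset.sum_const, Finset.card_univ, Fintype.card_fin, nsmul_eq_mul, mul_one]
  exact ENNReal.inv_mul_cancel (by exact_mod_cast hn) (by simp)

lemma WppR_mix {k : ℕ} (hk : k ≠ 0) (ν : Fin k → Measure ℝ) [∀ b, IsProbabilityMeasure (ν b)]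
    (μ : Measure ℝ) [IsProbabilityMeasure μ] :
    WppR p ((k : ℝ≥0∞)⁻¹ • ∑ b, ν b) μ ≤ (k : ℝ≥0∞)⁻¹ * ∑ b, WppR p (ν b) μ := by
  classical
  have hrw : ∑ b, WppR p (ν b) μ = ∑ b, ⨅ x : Cpl (ν b) μ, cost p x.1 :=
    Finset.sum_congr rfl fun b _ => WppR_eq_iInf _ _
  rw [hrw]
  refine le_trans ?_ (mul_le_mul_right (iInf_sum_le _ _) _)
  rw [ENNReal.mul_iInf_of_ne (by simp) (by simpa using hk)]
  refine le_iInf fun g => ?_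
  have hπ : (Measure.map Prod.fst ((k : ℝ≥0∞)⁻¹ • ∑ b, (g b).1)
      = (k : ℝ≥0∞)⁻¹ • ∑ b, ν b)
      ∧ Measure.map Prod.snd ((k : ℝ≥0∞)⁻¹ • ∑ b, (g b).1) = μ := by
    constructor
    · rw [map_smul_sum _ _ _ measurable_fst]
      congr 1
      exact Finset.sum_congr rfl fun b _ => (g b).2.1
    · rw [map_smul_sum _ _ _ measurable_snd]
      have : ∑ b : Fin k, Measure.map Prod.snd ((g b).1) = ∑ _b : Fin k, μ :=
        Finset.sum_congr rfl fun b _ => (g b).2.2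
      rw [this, Finset.sum_const, Finset.card_univ, Fintype.card_fin,
        ← Nat.cast_smul_eq_nsmul ℝ≥0∞ k μ, smul_smul,
        ENNReal.inv_mul_cancel (by exact_mod_cast hk) (by simp), one_smul]
  refine le_trans (WppR_le _ hπ) (le_of_eq ?_)
  rw [cost, lintegral_smul_measure, lintegral_finset_sum_measure]
  rfl

lemma WppR_emp_emp_le {n : ℕ} (hn : n ≠ 0) (hp0 : 0 ≤ p) (y z : Fin n → ℝ) :
    WppR p ((n : ℝ≥0∞)⁻¹ • ∑ i, Measure.dirac (y i)) ((n : ℝ≥0∞)⁻¹ • ∑ i, Measure.dirac (z i))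
      ≤ ENNReal.ofReal ((n : ℝ)⁻¹ * ∑ i, |y i - z i| ^ p) := by
  have hπ : (Measure.map Prod.fst ((n : ℝ≥0∞)⁻¹ • ∑ i, Measure.dirac (y i, z i))
        = (n : ℝ≥0∞)⁻¹ • ∑ i, Measure.dirac (y i))
      ∧ Measure.map Prod.snd ((n : ℝ≥0∞)⁻¹ • ∑ i, Measure.dirac (y i, z i))
        = (n : ℝ≥0∞)⁻¹ • ∑ i, Measure.dirac (z i) := by
    constructor
    · rw [map_smul_sum _ _ _ measurable_fst]
      congr 1
      exact Finset.sum_congr rfl fun i _ => Measure.map_dirac' measurable_fst _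
    · rw [map_smul_sum _ _ _ measurable_snd]
      congr 1
      exact Finset.sum_congr rfl fun i _ => Measure.map_dirac' measurable_snd _
  refine le_trans (WppR_le _ hπ) (le_of_eq ?_)
  rw [cost, lintegral_smul_measure, smul_eq_mul, lintegral_finset_sum_measure]
  have : ∀ i : Fin n, (∫⁻ z', ENNReal.ofReal (|z'.1 - z'.2| ^ p) ∂Measure.dirac (y i, z i))
      = ENNReal.ofReal (|y i - z i| ^ p) := fun i =>
    lintegral_dirac' _ (measurable_cost hp0)
  rw [Finset.sum_congr rfl fun i _ => this i]
  rw [ENNReal.ofReal_mul (by positivity),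
    ENNReal.ofReal_sum_of_nonneg (fun i _ => by positivity),
    ENNReal.ofReal_inv_of_pos (by exact_mod_cast Nat.pos_of_ne_zero hn), ENNReal.ofReal_natCast]
end part2

section gluing
open ProbabilityTheory
variable {p : ℝ}

lemma lintegral_prod_fst {ξ η : Measure ℝ} [SFinite ξ] [SFinite η] [IsProbabilityMeasure η]
    {f : ℝ → ℝ≥0∞} (hf : Measurable f) :
    ∫⁻ q, f q.1 ∂(ξ.prod η) = ∫⁻ x, f x ∂ξ := by
  have hmap : Measure.map Prod.fst (ξ.prod η) = ξ := by simp
  calc ∫⁻ q, f q.1 ∂(ξ.prod η) = ∫⁻ x, f x ∂(Measure.map Prod.fst (ξ.prod η)) :=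
        (lintegral_map hf measurable_fst).symm
    _ = _ := by rw [hmap]

lemma lintegral_prod_snd {ξ η : Measure ℝ} [SFinite ξ] [SFinite η] [IsProbabilityMeasure ξ]
    {f : ℝ → ℝ≥0∞} (hf : Measurable f) :
    ∫⁻ q, f q.2 ∂(ξ.prod η) = ∫⁻ x, f x ∂η := by
  have hmap : Measure.map Prod.snd (ξ.prod η) = η := by simp
  calc ∫⁻ q, f q.2 ∂(ξ.prod η) = ∫⁻ x, f x ∂(Measure.map Prod.snd (ξ.prod η)) :=
        (lintegral_map hf measurable_snd).symm
    _ = _ := by rw [hmap]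

lemma gluing {α β γ : Measure ℝ} [IsProbabilityMeasure α] [IsProbabilityMeasure β]
    [IsProbabilityMeasure γ] (hp : 1 ≤ p) (π₁ : Cpl α β) (π₂ : Cpl β γ) :
    ∃ τ : Cpl α γ, (cost p τ.1) ^ p⁻¹ ≤ (cost p π₁.1) ^ p⁻¹ + (cost p π₂.1) ^ p⁻¹ := by
  have hp0 : 0 ≤ p := zero_le_one.trans hp
  haveI := prob_of_coupling π₁
  haveI := prob_of_coupling π₂
  set ρ : Measure (ℝ × ℝ) := Measure.map Prod.swap π₁.1 with hρ
  haveI : IsProbabilityMeasure ρ := Measure.isProbabilityMeasure_map measurable_swap.aemeasurable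
  have hρfst : ρ.fst = β := by
    rw [hρ, Measure.fst_map_swap]
    exact π₁.2.2
  have hπ₂fst : π₂.1.fst = β := π₂.2.1
  set K₁ := ρ.condKernel
  set K₂ := π₂.1.condKernel
  set τ₀ : Measure (ℝ × (ℝ × ℝ)) := β ⊗ₘ (K₁ ×ₖ K₂) with hτ₀
  set τ : Measure (ℝ × ℝ) := τ₀.map Prod.snd with hτ
  -- compProd against K₁ / K₂ recover ρ / π₂
  have hρeq : β ⊗ₘ K₁ = ρ := by rw [← hρfst]; exact ρ.disintegrate ρ.condKernel
  have hπ₂eq : β ⊗ₘ K₂ = π₂.1 := by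
    conv_lhs => rw [← hπ₂fst]
    exact π₂.1.disintegrate π₂.1.condKernel
  -- marginals
  have hfst : τ.map Prod.fst = α := by
    rw [hτ, Measure.map_map measurable_fst measurable_snd]
    ext s hs
    rw [Measure.map_apply (measurable_fst.comp measurable_snd) hs, hτ₀,
      Measure.compProd_apply ((measurable_fst.comp measurable_snd) hs)]
    have hα : α = ρ.snd := by rw [hρ, Measure.snd_map_swap]; exact π₁.2.1.symm
    have : ∀ y : ℝ, (K₁ ×ₖ K₂) y (Prod.mk y ⁻¹' ((Prod.fst ∘ Prod.snd) ⁻¹' s)) = K₁ y s := by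
      intro y
      have hset : Prod.mk y ⁻¹' ((Prod.fst ∘ Prod.snd) ⁻¹' s) = s ×ˢ (Set.univ : Set ℝ) := by
        ext q; simp [Set.mem_prod]
      rw [hset, Kernel.prod_apply, Measure.prod_prod, measure_univ, mul_one]
    rw [lintegral_congr this, hα]
    rw [show ρ.snd = (β ⊗ₘ K₁).snd by rw [hρeq], Measure.snd_apply hs,
      Measure.compProd_apply (measurable_snd hs)]
    rfl
  have hsnd : τ.map Prod.snd = γ := by
    rw [hτ, Measure.map_map measurable_snd measurable_snd]
    ext s hs
    rw [Measure.map_apply (measurable_snd.comp measurable_snd) hs, hτ₀,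
      Measure.compProd_apply ((measurable_snd.comp measurable_snd) hs)]
    have hγ : γ = π₂.1.snd := π₂.2.2.symm
    have : ∀ y : ℝ, (K₁ ×ₖ K₂) y (Prod.mk y ⁻¹' ((Prod.snd ∘ Prod.snd) ⁻¹' s)) = K₂ y s := by
      intro y
      have hset : Prod.mk y ⁻¹' ((Prod.snd ∘ Prod.snd) ⁻¹' s) = (Set.univ : Set ℝ) ×ˢ s := by
        ext q; simp [Set.mem_prod]
      rw [hset, Kernel.prod_apply, Measure.prod_prod, measure_univ, one_mul]
    rw [lintegral_congr this, hγ]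
    rw [show π₂.1.snd = (β ⊗ₘ K₂).snd by rw [hπ₂eq], Measure.snd_apply hs,
      Measure.compProd_apply (measurable_snd hs)]
    rfl
  -- cost computations
  set F : ℝ × (ℝ × ℝ) → ℝ≥0∞ := fun w => ENNReal.ofReal |w.2.1 - w.1| with hF
  set G : ℝ × (ℝ × ℝ) → ℝ≥0∞ := fun w => ENNReal.ofReal |w.1 - w.2.2| with hG
  have hFm : Measurable F := ((measurable_fst.comp measurable_snd).sub measurable_fst).abs.ennreal_ofReal
  have hGm : Measurable G := (measurable_fst.sub (measurable_snd.comp measurable_snd)).abs.ennreal_ofReal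
  have hcostτ : cost p τ ≤ ∫⁻ w, (F w + G w) ^ p ∂τ₀ := by
    rw [cost, hτ, lintegral_map (measurable_cost hp0) measurable_snd]
    refine lintegral_mono fun w => ?_
    have h1 : |w.2.1 - w.2.2| ≤ |w.2.1 - w.1| + |w.1 - w.2.2| := abs_sub_le _ _ _
    calc ENNReal.ofReal (|w.2.1 - w.2.2| ^ p) = (ENNReal.ofReal |w.2.1 - w.2.2|) ^ p :=
          (ENNReal.ofReal_rpow_of_nonneg (abs_nonneg _) hp0).symm
      _ ≤ (F w + G w) ^ p := by
          refine ENNReal.rpow_le_rpow ?_ hp0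
          rw [hF, hG]
          calc ENNReal.ofReal |w.2.1 - w.2.2| ≤ ENNReal.ofReal (|w.2.1 - w.1| + |w.1 - w.2.2|) :=
                ENNReal.ofReal_le_ofReal h1
            _ = _ := ENNReal.ofReal_add (abs_nonneg _) (abs_nonneg _)
  have hFcost : ∫⁻ w, F w ^ p ∂τ₀ = cost p π₁.1 := by
    have hint : Measurable fun w : ℝ × (ℝ × ℝ) => F w ^ p :=
      hFm.pow_const _
    rw [hτ₀, Measure.lintegral_compProd hint]
    have : ∀ y : ℝ, ∫⁻ q, F (y, q) ^ p ∂((K₁ ×ₖ K₂) y)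
        = ∫⁻ x, ENNReal.ofReal (|x - y| ^ p) ∂(K₁ y) := by
      intro y
      rw [Kernel.prod_apply]
      have : ∀ q : ℝ × ℝ, F (y, q) ^ p = ENNReal.ofReal (|q.1 - y| ^ p) := fun q => by
        simp only [hF]; exact ENNReal.ofReal_rpow_of_nonneg (abs_nonneg _) hp0
      rw [lintegral_congr this]
      exact lintegral_prod_fst ((((Real.continuous_rpow_const hp0).measurable.comp
        ((measurable_id.sub measurable_const).abs))).ennreal_ofReal)
    rw [lintegral_congr this]
    have := (Measure.lintegral_compProd (μ := β) (κ := K₁)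
      (f := fun w : ℝ × ℝ => ENNReal.ofReal (|w.2 - w.1| ^ p)) (by
        exact (((Real.continuous_rpow_const hp0).measurable.comp
          ((measurable_snd.sub measurable_fst).abs))).ennreal_ofReal)).symm
    rw [this, hρeq, hρ, lintegral_map (by
        exact (((Real.continuous_rpow_const hp0).measurable.comp
          ((measurable_snd.sub measurable_fst).abs))).ennreal_ofReal) measurable_swap]
    rfl
  have hGcost : ∫⁻ w, G w ^ p ∂τ₀ = cost p π₂.1 := by
    have hint : Measurable fun w : ℝ × (ℝ × ℝ) => G w ^ p := hGm.pow_const _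
    rw [hτ₀, Measure.lintegral_compProd hint]
    have : ∀ y : ℝ, ∫⁻ q, G (y, q) ^ p ∂((K₁ ×ₖ K₂) y)
        = ∫⁻ z, ENNReal.ofReal (|y - z| ^ p) ∂(K₂ y) := by
      intro y
      rw [Kernel.prod_apply]
      have : ∀ q : ℝ × ℝ, G (y, q) ^ p = ENNReal.ofReal (|y - q.2| ^ p) := fun q => by
        simp only [hG]; exact ENNReal.ofReal_rpow_of_nonneg (abs_nonneg _) hp0
      rw [lintegral_congr this]
      exact lintegral_prod_snd ((((Real.continuous_rpow_const hp0).measurable.comp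
        ((measurable_const.sub measurable_id).abs))).ennreal_ofReal)
    rw [lintegral_congr this]
    have := (Measure.lintegral_compProd (μ := β) (κ := K₂)
      (f := fun w : ℝ × ℝ => ENNReal.ofReal (|w.1 - w.2| ^ p)) (measurable_cost hp0)).symm
    rw [this, hπ₂eq]
    rfl
  refine ⟨⟨τ, hfst, hsnd⟩, ?_⟩
  calc (cost p τ) ^ p⁻¹ ≤ (∫⁻ w, (F w + G w) ^ p ∂τ₀) ^ p⁻¹ :=
        ENNReal.rpow_le_rpow hcostτ (by positivity)
    _ ≤ (∫⁻ w, F w ^ p ∂τ₀) ^ p⁻¹ + (∫⁻ w, G w ^ p ∂τ₀) ^ p⁻¹ := by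
        have := ENNReal.lintegral_Lp_add_le (μ := τ₀) hFm.aemeasurable hGm.aemeasurable hp
        simpa [one_div] using this
    _ = (cost p π₁.1) ^ p⁻¹ + (cost p π₂.1) ^ p⁻¹ := by rw [hFcost, hGcost]
end gluing

section triangle
variable {p : ℝ}

lemma WppR_triangle (hp : 1 ≤ p) (α β γ : Measure ℝ) [IsProbabilityMeasure α]
    [IsProbabilityMeasure β] [IsProbabilityMeasure γ] :
    (WppR p α γ) ^ p⁻¹ ≤ (WppR p α β) ^ p⁻¹ + (WppR p β γ) ^ p⁻¹ := by
  have hpinv : (0:ℝ) < p⁻¹ := by positivity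
  have hmap : ∀ X : Measure ℝ → Measure ℝ → Type, True := fun _ => trivial
  rw [WppR_eq_iInf α β, WppR_eq_iInf β γ]
  have h1 : (⨅ x : Cpl α β, cost p x.1) ^ p⁻¹ = ⨅ x : Cpl α β, (cost p x.1) ^ p⁻¹ :=
    (ENNReal.orderIsoRpow p⁻¹ hpinv).map_iInf _
  have h2 : (⨅ x : Cpl β γ, cost p x.1) ^ p⁻¹ = ⨅ x : Cpl β γ, (cost p x.1) ^ p⁻¹ :=
    (ENNReal.orderIsoRpow p⁻¹ hpinv).map_iInf _
  rw [h1, h2, ENNReal.iInf_add]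
  refine le_iInf fun π₁ => ?_
  rw [ENNReal.add_iInf]
  refine le_iInf fun π₂ => ?_
  obtain ⟨τ, hτ⟩ := gluing hp π₁ π₂
  refine le_trans ?_ hτ
  refine ENNReal.rpow_le_rpow ?_ hpinv.le
  rw [WppR_eq_iInf]
  exact iInf_le _ τ

lemma WppR_le_two_mul (hp : 1 ≤ p) (α β γ : Measure ℝ) [IsProbabilityMeasure α]
    [IsProbabilityMeasure β] [IsProbabilityMeasure γ] :
    WppR p α γ ≤ (2:ℝ≥0∞) ^ (p - 1) * (WppR p α β + WppR p β γ) := by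
  have hp0 : (0:ℝ) < p := lt_of_lt_of_le one_pos hp
  have hrec : ∀ x : ℝ≥0∞, (x ^ p⁻¹) ^ p = x := fun x => by
    rw [← ENNReal.rpow_mul, inv_mul_cancel₀ hp0.ne', ENNReal.rpow_one]
  calc WppR p α γ = ((WppR p α γ) ^ p⁻¹) ^ p := (hrec _).symm
    _ ≤ ((WppR p α β) ^ p⁻¹ + (WppR p β γ) ^ p⁻¹) ^ p :=
        ENNReal.rpow_le_rpow (WppR_triangle hp α β γ) hp0.le
    _ ≤ (2:ℝ≥0∞) ^ (p - 1) * (((WppR p α β) ^ p⁻¹) ^ p + ((WppR p β γ) ^ p⁻¹) ^ p) :=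
        ENNReal.rpow_add_le_mul_rpow_add_rpow _ _ hp
    _ = _ := by rw [hrec, hrec]
end triangle


section empfacts
variable {p : ℝ}

lemma empMeas_eq (n : ℕ) (z : Fin n → ℝ) :
    empMeas n z = (n : ℝ≥0∞)⁻¹ • ∑ i, Measure.dirac (z i) := rfl

lemma empMeas_isProb {n : ℕ} (hn : n ≠ 0) (z : Fin n → ℝ) :
    IsProbabilityMeasure (empMeas n z) := by
  rw [empMeas_eq]; exact empMeas_prob hn z

lemma measurable_absrpow (hp0 : 0 ≤ p) : Measurable fun u : ℝ => ENNReal.ofReal (|u| ^ p) :=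
  (measurable_id.abs.pow_const p).ennreal_ofReal

lemma lintegral_empMeas {n : ℕ} (z : Fin n → ℝ) {f : ℝ → ℝ≥0∞} (hf : Measurable f) :
    ∫⁻ u, f u ∂(empMeas n z) = (n : ℝ≥0∞)⁻¹ * ∑ i, f (z i) := by
  rw [empMeas_eq, lintegral_smul_measure, lintegral_finset_sum_measure]
  congr 1
  exact Finset.sum_congr rfl fun i _ => lintegral_dirac' _ hf

lemma WppR_emp_lt_top {n : ℕ} (hn : n ≠ 0) (hp : 1 ≤ p) (μ : Measure ℝ)
    [IsProbabilityMeasure μ] (hμ : Integrable (fun u => |u| ^ p) μ) (z : Fin n → ℝ) :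
    WppR p (empMeas n z) μ ≠ ∞ := by
  have hp0 : (0:ℝ) ≤ p := zero_le_one.trans hp
  haveI : IsProbabilityMeasure (empMeas n z) := empMeas_isProb hn z
  have hcpl : (Measure.map Prod.fst ((empMeas n z).prod μ) = empMeas n z)
      ∧ Measure.map Prod.snd ((empMeas n z).prod μ) = μ := by constructor <;> simp
  refine ne_top_of_le_ne_top ?_ (WppR_le _ hcpl)
  rw [cost]
  have hbound : ∀ w : ℝ × ℝ, ENNReal.ofReal (|w.1 - w.2| ^ p)
      ≤ (2:ℝ≥0∞) ^ (p-1) * (ENNReal.ofReal (|w.1| ^ p) + ENNReal.ofReal (|w.2| ^ p)) := by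
    intro w
    have habs : |w.1 - w.2| ≤ |w.1| + |w.2| := by
      calc |w.1 - w.2| = |w.1 + -w.2| := by rw [sub_eq_add_neg]
        _ ≤ |w.1| + |-w.2| := abs_add_le _ _
        _ = |w.1| + |w.2| := by rw [abs_neg]
    calc ENNReal.ofReal (|w.1 - w.2| ^ p) = (ENNReal.ofReal |w.1 - w.2|) ^ p :=
          (ENNReal.ofReal_rpow_of_nonneg (abs_nonneg _) hp0).symm
      _ ≤ (ENNReal.ofReal |w.1| + ENNReal.ofReal |w.2|) ^ p := by
          refine ENNReal.rpow_le_rpow ?_ hp0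
          rw [← ENNReal.ofReal_add (abs_nonneg _) (abs_nonneg _)]
          exact ENNReal.ofReal_le_ofReal habs
      _ ≤ (2:ℝ≥0∞) ^ (p-1) * ((ENNReal.ofReal |w.1|) ^ p + (ENNReal.ofReal |w.2|) ^ p) :=
          ENNReal.rpow_add_le_mul_rpow_add_rpow _ _ hp
      _ = _ := by rw [ENNReal.ofReal_rpow_of_nonneg (abs_nonneg _) hp0,
            ENNReal.ofReal_rpow_of_nonneg (abs_nonneg _) hp0]
  refine ne_top_of_le_ne_top ?_ (lintegral_mono hbound)
  have hA : Measurable fun w : ℝ × ℝ => ENNReal.ofReal (|w.1| ^ p) :=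
    (measurable_absrpow hp0).comp measurable_fst
  have hB : Measurable fun w : ℝ × ℝ => ENNReal.ofReal (|w.2| ^ p) :=
    (measurable_absrpow hp0).comp measurable_snd
  rw [lintegral_const_mul _ (f := fun w : ℝ × ℝ => ENNReal.ofReal (|w.1| ^ p) + ENNReal.ofReal (|w.2| ^ p)) (hA.add hB), lintegral_add_left hA]
  have h1 : ∫⁻ w : ℝ × ℝ, ENNReal.ofReal (|w.1| ^ p) ∂((empMeas n z).prod μ)
      = (n : ℝ≥0∞)⁻¹ * ∑ i, ENNReal.ofReal (|z i| ^ p) := by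
    rw [lintegral_prod_fst (measurable_absrpow hp0), lintegral_empMeas _ (measurable_absrpow hp0)]
  have h2 : (∫⁻ w : ℝ × ℝ, ENNReal.ofReal (|w.2| ^ p) ∂((empMeas n z).prod μ)) ≠ ∞ := by
    rw [lintegral_prod_snd (measurable_absrpow hp0)]
    have := (hasFiniteIntegral_iff_ofReal
      (ae_of_all _ fun v => Real.rpow_nonneg (abs_nonneg v) p)).mp hμ.2
    exact this.ne
  refine ENNReal.mul_ne_top (ENNReal.rpow_ne_top_of_nonneg (by linarith) (by simp)) ?_
  refine ENNReal.add_ne_top.mpr ⟨?_, h2⟩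
  rw [h1]
  refine ENNReal.mul_ne_top (by simpa using hn) ?_
  exact (ENNReal.sum_lt_top.mpr (fun i _ => ENNReal.ofReal_lt_top)).ne

lemma WppR_emp_key {n : ℕ} (hn : n ≠ 0) (hp : 1 ≤ p) (μ : Measure ℝ)
    [IsProbabilityMeasure μ] (y z : Fin n → ℝ) :
    WppR p (empMeas n y) μ ≤ (2:ℝ≥0∞) ^ (p-1) *
      (ENNReal.ofReal ((n : ℝ)⁻¹ * ∑ i, |y i - z i| ^ p) + WppR p (empMeas n z) μ) := by
  have hp0 : (0:ℝ) ≤ p := zero_le_one.trans hp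
  haveI := empMeas_isProb hn y
  haveI := empMeas_isProb hn z
  refine le_trans (WppR_le_two_mul hp (empMeas n y) (empMeas n z) μ) ?_
  refine mul_le_mul_right (add_le_add_left ?_ _) _
  rw [empMeas_eq, empMeas_eq]
  exact WppR_emp_emp_le hn hp0 y z

lemma WppR_emp_rooted {n : ℕ} (hn : n ≠ 0) (hp : 1 ≤ p) (μ : Measure ℝ)
    [IsProbabilityMeasure μ] (y z : Fin n → ℝ) :
    (WppR p (empMeas n y) μ) ^ p⁻¹ ≤ (WppR p (empMeas n z) μ) ^ p⁻¹
      + ENNReal.ofReal (((n : ℝ)⁻¹ * ∑ i, |y i - z i| ^ p) ^ p⁻¹) := by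
  have hp0 : (0:ℝ) ≤ p := zero_le_one.trans hp
  have hpinv : (0:ℝ) ≤ p⁻¹ := by positivity
  haveI := empMeas_isProb hn y
  haveI := empMeas_isProb hn z
  have htri := WppR_triangle hp (empMeas n y) (empMeas n z) μ
  refine le_trans htri ?_
  rw [add_comm]
  refine add_le_add_right ?_ _
  rw [← ENNReal.ofReal_rpow_of_nonneg (by positivity) hpinv]
  refine ENNReal.rpow_le_rpow ?_ hpinv
  rw [empMeas_eq, empMeas_eq]
  exact WppR_emp_emp_le hn hp0 y z

lemma measurable_WppR_emp {n : ℕ} (hn : n ≠ 0) (hp : 1 ≤ p) (μ : Measure ℝ)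
    [IsProbabilityMeasure μ] (hμ : Integrable (fun u => |u| ^ p) μ) :
    Measurable fun z : Fin n → ℝ => WppR p (empMeas n z) μ := by
  have hp0 : (0:ℝ) ≤ p := zero_le_one.trans hp
  have hppos : (0:ℝ) < p := lt_of_lt_of_le one_pos hp
  have hpinv : (0:ℝ) ≤ p⁻¹ := by positivity
  set h : (Fin n → ℝ) → ℝ≥0∞ := fun z => (WppR p (empMeas n z) μ) ^ p⁻¹ with hh
  set B : (Fin n → ℝ) → (Fin n → ℝ) → ℝ≥0∞ := fun y z =>
    ENNReal.ofReal (((n : ℝ)⁻¹ * ∑ i, |y i - z i| ^ p) ^ p⁻¹) with hB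
  have hkey : ∀ y z, h y ≤ h z + B y z := fun y z => WppR_emp_rooted hn hp μ y z
  have hBsymm : ∀ y z, B y z = B z y := fun y z => by
    have habs : ∀ i, |y i - z i| = |z i - y i| := fun i => abs_sub_comm _ _
    simp only [hB, habs]
  have hcont : Continuous h := by
    rw [continuous_iff_continuousAt]
    intro w
    have hfin : h w ≠ ∞ :=
      ENNReal.rpow_ne_top_of_nonneg hpinv (WppR_emp_lt_top hn hp μ hμ w)
    rw [ContinuousAt, ENNReal.tendsto_nhds hfin]
    intro ε hε
    have hBcont : Filter.Tendsto (fun z => B z w) (nhds w) (nhds 0) := by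
      have hreal : Continuous fun z : Fin n → ℝ => ((n : ℝ)⁻¹ * ∑ i, |z i - w i| ^ p) ^ p⁻¹ := by
        refine Continuous.rpow_const ?_ (fun _ => Or.inr hpinv)
        refine continuous_const.mul ?_
        refine continuous_finset_sum _ fun i _ => ?_
        exact Continuous.rpow_const ((continuous_apply i).sub continuous_const).abs
          (fun _ => Or.inr hp0)
      have h0 : ((n : ℝ)⁻¹ * ∑ i : Fin n, |w i - w i| ^ p) ^ p⁻¹ = 0 := by
        rw [show ∑ i : Fin n, |w i - w i| ^ p = 0 by
            refine Finset.sum_eq_zero fun i _ => ?_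
            rw [sub_self, abs_zero, Real.zero_rpow hppos.ne']]
        rw [mul_zero, Real.zero_rpow (by positivity)]
      have := (ENNReal.continuous_ofReal.comp hreal).tendsto w
      rw [Function.comp, h0, ENNReal.ofReal_zero] at this
      exact this
    have hev : ∀ᶠ z in nhds w, B z w < ε := hBcont.eventually_lt_const hε
    filter_upwards [hev] with z hz
    constructor
    · rw [tsub_le_iff_right]
      refine le_trans (hkey w z) ?_
      rw [hBsymm w z]
      exact add_le_add_right hz.le _
    · refine le_trans (hkey z w) ?_
      exact add_le_add_right hz.le _
  have hg : (fun z : Fin n → ℝ => WppR p (empMeas n z) μ) = fun z => (h z) ^ p := by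
    funext z
    rw [hh, ← ENNReal.rpow_mul, inv_mul_cancel₀ hppos.ne', ENNReal.rpow_one]
  rw [hg]
  exact (hcont.measurable).pow_const p
end empfacts

/-- Lemma 6 of the paper, case `ℓ = 0` (`m = k·n`). For an exchangeable
vector `Y ∈ ℝᵐ` and `μ ∈ P(ℝ)` with finite `p`-th moments,
`(1/2^{p-1})·E[W_p^p(μ̂_Y, μ)] ≤ W_p^p(Law(Y¹,…,Yⁿ), μ^{⊗n}) + ε_{n,p}(μ)`. -/
theorem stmt9 {Ω : Type*} [MeasurableSpace Ω] (ℙ : Measure Ω) [IsProbabilityMeasure ℙ]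
    (k n m : ℕ) (hk : 0 < k) (hn : 0 < n) (hm : m = k * n) (hnm : n ≤ m)
    (Y : Ω → Fin m → ℝ) (hY : Measurable Y)
    (hexch : ∀ σ : Equiv.Perm (Fin m),
      Measure.map (fun ω => fun i : Fin m => Y ω (σ i)) ℙ = Measure.map Y ℙ)
    (p : ℝ) (hp : 1 ≤ p)
    (hYmom : ∀ i, Integrable (fun ω => |Y ω i| ^ p) ℙ)
    (μ : Measure ℝ) [IsProbabilityMeasure μ]
    (hμ : Integrable (fun u => |u| ^ p) μ) :
    (ENNReal.ofReal ((2 : ℝ) ^ (p - 1)))⁻¹ * ∫⁻ ω, WppR p (empMeas m (Y ω)) μ ∂ℙ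
      ≤ WppVec p n
          (Measure.map (fun ω => fun i : Fin n => Y ω (Fin.castLE hnm i)) ℙ)
          (Measure.pi fun _ : Fin n => μ)
        + epsNp p n μ := by
  classical
  have hp0 : (0:ℝ) ≤ p := zero_le_one.trans hp
  have hppos : (0:ℝ) < p := lt_of_lt_of_le one_pos hp
  have hkne : (k:ℝ≥0∞) ≠ 0 := by exact_mod_cast hk.ne'
  set g : (Fin n → ℝ) → ℝ≥0∞ := fun z => WppR p (empMeas n z) μ with hg
  have hgmeas : Measurable g := measurable_WppR_emp hn.ne' hp μ hμ
  set νn : Measure (Fin n → ℝ) :=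
    Measure.map (fun ω => fun i : Fin n => Y ω (Fin.castLE hnm i)) ℙ with hνn
  have hrestrm : Measurable fun x : Fin m → ℝ => fun i : Fin n => x (Fin.castLE hnm i) :=
    measurable_pi_lambda _ fun i => measurable_pi_apply _
  have hYn : Measurable fun ω => fun i : Fin n => Y ω (Fin.castLE hnm i) := hrestrm.comp hY
  haveI : IsProbabilityMeasure νn := Measure.isProbabilityMeasure_map hYn.aemeasurable
  -- the block index equivalence
  set e : Fin k × Fin n ≃ Fin m := finProdFinEquiv.trans (finCongr hm.symm) with he
  have he0 : ∀ i : Fin n, e (⟨0, hk⟩, i) = Fin.castLE hnm i := by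
    intro i
    apply Fin.ext
    simp [he, finProdFinEquiv, finCongr]
  have hblockm : ∀ b : Fin k, Measurable fun ω => fun i : Fin n => Y ω (e (b, i)) :=
    fun b => measurable_pi_lambda _ fun i => (measurable_pi_apply _).comp hY
  -- block decomposition of the empirical measure
  have hdecomp : ∀ x : Fin m → ℝ,
      empMeas m x = (k : ℝ≥0∞)⁻¹ • ∑ b : Fin k, empMeas n (fun i => x (e (b, i))) := by
    intro x
    have hsum : ∑ j : Fin m, Measure.dirac (x j)
        = ∑ q : Fin k × Fin n, Measure.dirac (x (e q)) :=
      (Equiv.sum_comp e (fun j => Measure.dirac (x j))).symm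
    rw [empMeas_eq, hsum, Fintype.sum_prod_type]
    have : ∀ b : Fin k, empMeas n (fun i => x (e (b, i)))
        = (n : ℝ≥0∞)⁻¹ • ∑ i : Fin n, Measure.dirac (x (e (b, i))) := fun b => rfl
    simp only [this]
    rw [← Finset.smul_sum, smul_smul]
    congr 1
    rw [hm, Nat.cast_mul, ENNReal.mul_inv (Or.inl hkne) (Or.inl (by simp))]
  -- pointwise convexity over blocks
  have hconv : ∀ x : Fin m → ℝ, WppR p (empMeas m x) μ
      ≤ (k : ℝ≥0∞)⁻¹ * ∑ b : Fin k, g (fun i => x (e (b, i))) := by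
    intro x
    rw [hdecomp x]
    haveI : ∀ b : Fin k, IsProbabilityMeasure (empMeas n (fun i => x (e (b, i)))) :=
      fun b => empMeas_isProb hn.ne' _
    exact WppR_mix hk.ne' (fun b => empMeas n (fun i => x (e (b, i)))) μ
  -- each block has the law νn
  have hblocklaw : ∀ b : Fin k,
      Measure.map (fun ω => fun i : Fin n => Y ω (e (b, i))) ℙ = νn := by
    intro b
    set σ : Equiv.Perm (Fin m) :=
      (e.symm.trans ((Equiv.swap (⟨0, hk⟩ : Fin k) b).prodCongr (Equiv.refl (Fin n)))).trans e
      with hσdef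
    have hσ : ∀ i : Fin n, σ (Fin.castLE hnm i) = e (b, i) := by
      intro i
      have h1 : e.symm (Fin.castLE hnm i) = (⟨0, hk⟩, i) := by
        rw [← he0 i, Equiv.symm_apply_apply]
      simp [hσdef, h1, Equiv.prodCongr, Equiv.swap_apply_left]
    have hYσ : Measurable fun ω => fun j : Fin m => Y ω (σ j) :=
      measurable_pi_lambda _ fun j => (measurable_pi_apply _).comp hY
    have hcomp : (fun ω => fun i : Fin n => Y ω (e (b, i)))
        = (fun x : Fin m → ℝ => fun i : Fin n => x (Fin.castLE hnm i))
          ∘ (fun ω => fun j : Fin m => Y ω (σ j)) := by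
      funext ω
      funext i
      simp [Function.comp, hσ i]
    rw [hcomp, ← Measure.map_map hrestrm hYσ, hexch σ, Measure.map_map hrestrm hY, hνn]
    rfl
  -- integral step 1
  have hstep1 : (∫⁻ ω, WppR p (empMeas m (Y ω)) μ ∂ℙ) ≤ ∫⁻ y, g y ∂νn := by
    calc ∫⁻ ω, WppR p (empMeas m (Y ω)) μ ∂ℙ
        ≤ ∫⁻ ω, (k : ℝ≥0∞)⁻¹ * ∑ b : Fin k, g (fun i => Y ω (e (b, i))) ∂ℙ :=
          lintegral_mono fun ω => hconv (Y ω)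
      _ = (k : ℝ≥0∞)⁻¹ * ∑ b : Fin k, ∫⁻ ω, g (fun i => Y ω (e (b, i))) ∂ℙ := by
          have hbm : ∀ b : Fin k, Measurable fun ω => g (fun i => Y ω (e (b, i))) :=
            fun b => hgmeas.comp (hblockm b)
          have hfm : Measurable fun ω => ∑ b : Fin k, g (fun i => Y ω (e (b, i))) :=
            Finset.measurable_sum _ fun b _ => hbm b
          rw [lintegral_const_mul _ hfm]
          congr 1
          exact lintegral_finset_sum _ (fun b _ => hbm b)
      _ = (k : ℝ≥0∞)⁻¹ * ∑ _b : Fin k, ∫⁻ y, g y ∂νn := by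
          congr 1
          refine Finset.sum_congr rfl fun b _ => ?_
          rw [← hblocklaw b, lintegral_map hgmeas (hblockm b)]
      _ = ∫⁻ y, g y ∂νn := by
          rw [Finset.sum_const, Finset.card_univ, Fintype.card_fin, nsmul_eq_mul,
            ← mul_assoc, ENNReal.inv_mul_cancel hkne (by simp), one_mul]
  -- integral step 2: any coupling of νn with the product measure
  set c : ℝ≥0∞ := (2:ℝ≥0∞) ^ (p - 1) with hc
  have hc0 : c ≠ 0 := (ENNReal.rpow_pos (by norm_num) (by simp)).ne'
  have hcT : c ≠ ∞ := ENNReal.rpow_ne_top_of_nonneg (by linarith) (by simp)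
  have hcvec : Measurable fun z : (Fin n → ℝ) × (Fin n → ℝ) =>
      ENNReal.ofReal ((n : ℝ)⁻¹ * ∑ i, |z.1 i - z.2 i| ^ p) := by
    refine Measurable.ennreal_ofReal ?_
    refine Measurable.const_mul ?_ _
    refine Finset.measurable_sum _ fun i _ => ?_
    exact (((measurable_pi_apply i).comp measurable_fst).sub
      ((measurable_pi_apply i).comp measurable_snd)).abs.pow_const p
  have hstep2 : ∀ π : Measure ((Fin n → ℝ) × (Fin n → ℝ)),
      (π.map Prod.fst = νn ∧ π.map Prod.snd = Measure.pi fun _ : Fin n => μ) →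
      (∫⁻ y, g y ∂νn) ≤ c * ((∫⁻ z, ENNReal.ofReal ((n : ℝ)⁻¹ * ∑ i, |z.1 i - z.2 i| ^ p) ∂π)
        + epsNp p n μ) := by
    intro π hπ
    have h1 : (∫⁻ y, g y ∂νn) = ∫⁻ w, g w.1 ∂π := by
      rw [← hπ.1, lintegral_map hgmeas measurable_fst]
    have h2 : (∫⁻ w, g w.2 ∂π) = epsNp p n μ := by
      rw [epsNp, ← hπ.2, lintegral_map hgmeas measurable_snd]
    have hpt : ∀ w : (Fin n → ℝ) × (Fin n → ℝ), g w.1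
        ≤ c * (ENNReal.ofReal ((n : ℝ)⁻¹ * ∑ i, |w.1 i - w.2 i| ^ p) + g w.2) :=
      fun w => WppR_emp_key hn.ne' hp μ w.1 w.2
    calc (∫⁻ y, g y ∂νn) = ∫⁻ w, g w.1 ∂π := h1
      _ ≤ ∫⁻ w, c * (ENNReal.ofReal ((n : ℝ)⁻¹ * ∑ i, |w.1 i - w.2 i| ^ p) + g w.2) ∂π :=
          lintegral_mono hpt
      _ = c * ((∫⁻ z, ENNReal.ofReal ((n : ℝ)⁻¹ * ∑ i, |z.1 i - z.2 i| ^ p) ∂π)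
          + ∫⁻ w, g w.2 ∂π) := by
          have hsndm : Measurable fun w : (Fin n → ℝ) × (Fin n → ℝ) => g w.2 :=
            hgmeas.comp measurable_snd
          rw [lintegral_const_mul _ (f := fun w : (Fin n → ℝ) × (Fin n → ℝ) => ENNReal.ofReal ((n : ℝ)⁻¹ * ∑ i, |w.1 i - w.2 i| ^ p) + g w.2) (hcvec.add hsndm), lintegral_add_left hcvec]
      _ = _ := by rw [h2]
  -- put everything together
  have hofReal : ENNReal.ofReal ((2:ℝ) ^ (p - 1)) = c := by
    rw [hc, show (2:ℝ≥0∞) = ENNReal.ofReal (2:ℝ) by simp]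
    exact (ENNReal.ofReal_rpow_of_pos two_pos).symm
  set Wv : ℝ≥0∞ := WppVec p n νn (Measure.pi fun _ : Fin n => μ) with hWv
  suffices hX : (∫⁻ ω, WppR p (empMeas m (Y ω)) μ ∂ℙ) ≤ c * (Wv + epsNp p n μ) by
    rw [hofReal]
    calc c⁻¹ * ∫⁻ ω, WppR p (empMeas m (Y ω)) μ ∂ℙ ≤ c⁻¹ * (c * (Wv + epsNp p n μ)) :=
          mul_le_mul_right hX _
      _ = Wv + epsNp p n μ := by rw [← mul_assoc, ENNReal.inv_mul_cancel hc0 hcT, one_mul]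
  refine ENNReal.le_of_forall_pos_le_add fun δ hδ hfin => ?_
  have hWfin : Wv ≠ ∞ := by
    intro hW
    rw [hW] at hfin
    rw [top_add, ENNReal.mul_top hc0] at hfin
    exact (lt_irrefl _ hfin).elim
  have hη0 : c⁻¹ * (δ : ℝ≥0∞) ≠ 0 := by
    refine mul_ne_zero (ENNReal.inv_ne_zero.mpr hcT) ?_
    exact_mod_cast hδ.ne'
  have hlt : Wv < Wv + c⁻¹ * δ := ENNReal.lt_add_right hWfin hη0
  rw [hWv, WppVec] at hlt
  obtain ⟨π, hlt2⟩ := iInf_lt_iff.mp hlt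
  obtain ⟨hπprop, hπcost⟩ := iInf_lt_iff.mp hlt2
  calc (∫⁻ ω, WppR p (empMeas m (Y ω)) μ ∂ℙ) ≤ ∫⁻ y, g y ∂νn := hstep1
    _ ≤ c * ((∫⁻ z, ENNReal.ofReal ((n : ℝ)⁻¹ * ∑ i, |z.1 i - z.2 i| ^ p) ∂π)
        + epsNp p n μ) := hstep2 π hπprop
    _ ≤ c * ((Wv + c⁻¹ * δ) + epsNp p n μ) :=
        mul_le_mul_right (add_le_add_left hπcost.le _) _
    _ = c * (Wv + epsNp p n μ) + c * (c⁻¹ * δ) := by ring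
    _ = c * (Wv + epsNp p n μ) + δ := by
        rw [← mul_assoc, ENNReal.mul_inv_cancel hc0 hcT, one_mul]
end

section
/- Let h : [0,∞) → [0,∞) be absolutely continuous with h(0) = 0, and suppose that for a.e. t, h'(t) ≤ −a·h(t) + 2b·√(h(t))·√(g(t)) + b·g(t), where a ≥ 0, b > 0, and g : [0,∞) → [0,∞) is continuous. Then h(t) ≤ b·e^{−a t}·(2 + 8 b t)·∫₀ᵗ e^{a s} g(s) ds for all t ≥ 0. -/
open MeasureTheory

lemma stmt12_ibp (h' : ℝ → ℝ) (a t : ℝ) (ha : 0 ≤ a) (ht : 0 ≤ t)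
    (hint : IntervalIntegrable h' volume 0 t) :
    Real.exp (a*t) * (∫ u in (0:ℝ)..t, h' u) =
      (∫ u in (0:ℝ)..t, Real.exp (a*u) * h' u) +
        a * ∫ s in (0:ℝ)..t, Real.exp (a*s) * ∫ u in (0:ℝ)..s, h' u := by
  set μ := volume.restrict (Set.Ioc (0:ℝ) t) with hμ
  haveI hfin : IsFiniteMeasure μ := by
    constructor
    rw [hμ, Measure.restrict_apply_univ]
    exact (measure_mono Set.Ioc_subset_Icc_self).trans_lt isCompact_Icc.measure_lt_top
  have h'int : IntegrableOn h' (Set.Ioc 0 t) volume := hint.1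
  set f : ℝ × ℝ → ℝ := fun p => if p.2 ≤ p.1 then (a * Real.exp (a * p.1)) * h' p.2 else 0
    with hf
  -- measurability
  have hmeasF : AEStronglyMeasurable (fun p : ℝ × ℝ => (a * Real.exp (a * p.1)) * h' p.2)
      (μ.prod μ) := by
    have h1 : Continuous (fun p : ℝ × ℝ => a * Real.exp (a * p.1)) := by continuity
    exact h1.aestronglyMeasurable.mul h'int.aestronglyMeasurable.comp_snd
  have hsetm : MeasurableSet {p : ℝ × ℝ | p.2 ≤ p.1} :=
    measurableSet_le measurable_snd measurable_fst
  have hfeq : f = Set.indicator {p : ℝ × ℝ | p.2 ≤ p.1}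
      (fun p => (a * Real.exp (a * p.1)) * h' p.2) := by
    funext p; simp [hf, Set.indicator_apply, Set.mem_setOf_eq]
  have hmeasf : AEStronglyMeasurable f (μ.prod μ) := by
    rw [hfeq]; exact hmeasF.indicator hsetm
  -- integrability
  have hprodeq : μ.prod μ = (volume.prod volume).restrict
      ((Set.Ioc (0:ℝ) t) ×ˢ (Set.Ioc (0:ℝ) t)) := Measure.prod_restrict _ _
  have hBint : Integrable (fun p : ℝ × ℝ => (a * Real.exp (a * t)) * |h' p.2|) (μ.prod μ) := by
    have := (integrable_const (μ := μ) (a * Real.exp (a * t))).mul_prod h'int.abs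
    simpa using this
  have hfint : Integrable f (μ.prod μ) := by
    refine hBint.mono' hmeasf ?_
    rw [hprodeq]
    filter_upwards [ae_restrict_mem (measurableSet_Ioc.prod measurableSet_Ioc)] with p hp
    obtain ⟨hp1, hp2⟩ := hp
    simp only [hf]
    split_ifs with hle
    · rw [Real.norm_eq_abs, abs_mul, abs_mul, abs_of_nonneg ha,
        abs_of_nonneg (Real.exp_pos _).le]
      have : Real.exp (a * p.1) ≤ Real.exp (a * t) :=
        Real.exp_le_exp.mpr (mul_le_mul_of_nonneg_left hp1.2 ha)
      exact mul_le_mul_of_nonneg_right (mul_le_mul_of_nonneg_left this ha)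
        (abs_nonneg (h' p.2))
    · simp
      positivity
  -- inner integral, step 2
  have step2 : ∀ s ∈ Set.Ioc (0:ℝ) t,
      (∫ u, f (s, u) ∂μ) = a * Real.exp (a * s) * ∫ u in (0:ℝ)..s, h' u := by
    intro s hs
    have heq : (fun u => f (s, u)) =
        Set.indicator (Set.Iic s) (fun u => (a * Real.exp (a * s)) * h' u) := by
      funext u; simp [hf, Set.indicator_apply]
    rw [heq, integral_indicator measurableSet_Iic, hμ,
      Measure.restrict_restrict measurableSet_Iic]
    have hset : Set.Iic s ∩ Set.Ioc 0 t = Set.Ioc 0 s := by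
      ext x
      simp only [Set.mem_inter_iff, Set.mem_Iic, Set.mem_Ioc]
      constructor
      · rintro ⟨h1, h2, h3⟩; exact ⟨h2, h1⟩
      · rintro ⟨h1, h2⟩; exact ⟨h2, h1, h2.trans hs.2⟩
    rw [hset, MeasureTheory.integral_const_mul, intervalIntegral.integral_of_le hs.1.le]
  -- inner integral, step 3
  have hexp_int : ∀ u v : ℝ, IntervalIntegrable (fun s => a * Real.exp (a * s)) volume u v := by
    intro u v
    exact (by continuity : Continuous fun s : ℝ => a * Real.exp (a * s)).intervalIntegrable u v
  have hexp_ftc : ∀ u : ℝ, u ≤ t → (∫ s in u..t, a * Real.exp (a * s)) =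
      Real.exp (a * t) - Real.exp (a * u) := by
    intro u hu
    refine intervalIntegral.integral_eq_sub_of_hasDerivAt (f := fun x => Real.exp (a * x))
      (fun s _ => ?_) (hexp_int u t)
    have h1 : HasDerivAt (fun x : ℝ => a * x) a s := by
      simpa using (hasDerivAt_id s).const_mul a
    simpa [mul_comm] using h1.exp
  have step3 : ∀ u ∈ Set.Ioc (0:ℝ) t,
      (∫ s, f (s, u) ∂μ) = (Real.exp (a * t) - Real.exp (a * u)) * h' u := by
    intro u hu
    have heq : (fun s => f (s, u)) =
        Set.indicator (Set.Ici u) (fun s => (a * Real.exp (a * s)) * h' u) := by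
      funext s; simp [hf, Set.indicator_apply]
    rw [heq, integral_indicator measurableSet_Ici, hμ,
      Measure.restrict_restrict measurableSet_Ici]
    have hset : Set.Ici u ∩ Set.Ioc 0 t = Set.Icc u t := by
      ext x
      simp only [Set.mem_inter_iff, Set.mem_Ici, Set.mem_Ioc, Set.mem_Icc]
      constructor
      · rintro ⟨h1, h2, h3⟩; exact ⟨h1, h3⟩
      · rintro ⟨h1, h2⟩; exact ⟨h1, hu.1.trans_le h1, h2⟩
    rw [hset, MeasureTheory.integral_mul_const, integral_Icc_eq_integral_Ioc,
      ← intervalIntegral.integral_of_le hu.2, hexp_ftc u hu.2]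
  -- assemble
  have key : a * (∫ s in (0:ℝ)..t, Real.exp (a*s) * ∫ u in (0:ℝ)..s, h' u) =
      Real.exp (a*t) * (∫ u in (0:ℝ)..t, h' u) - ∫ u in (0:ℝ)..t, Real.exp (a*u) * h' u := by
    have e1 : a * (∫ s in (0:ℝ)..t, Real.exp (a*s) * ∫ u in (0:ℝ)..s, h' u) =
        ∫ s, (∫ u, f (s, u) ∂μ) ∂μ := by
      rw [← intervalIntegral.integral_const_mul, intervalIntegral.integral_of_le ht]
      refine (setIntegral_congr_fun measurableSet_Ioc fun s hs => ?_).symm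
      rw [step2 s hs]; ring
    have e2 : (∫ u, (∫ s, f (s, u) ∂μ) ∂μ) =
        Real.exp (a*t) * (∫ u in (0:ℝ)..t, h' u) - ∫ u in (0:ℝ)..t, Real.exp (a*u) * h' u := by
      have c1 : (∫ u, (∫ s, f (s, u) ∂μ) ∂μ) =
          ∫ u in Set.Ioc (0:ℝ) t, (Real.exp (a * t) - Real.exp (a * u)) * h' u := by
        exact setIntegral_congr_fun measurableSet_Ioc fun u hu => step3 u hu
      rw [c1]
      have hi1 : IntegrableOn (fun u => Real.exp (a * t) * h' u) (Set.Ioc 0 t) volume :=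
        h'int.const_mul _
      have hi2 : IntegrableOn (fun u => Real.exp (a * u) * h' u) (Set.Ioc 0 t) volume := by
        have hc : ContinuousOn (fun u : ℝ => Real.exp (a * u)) (Set.uIcc 0 t) :=
          (Real.continuous_exp.comp (continuous_const.mul continuous_id)).continuousOn
        exact (hint.continuousOn_mul hc).1
      have : ∫ u in Set.Ioc (0:ℝ) t, (Real.exp (a * t) - Real.exp (a * u)) * h' u =
          (∫ u in Set.Ioc (0:ℝ) t, Real.exp (a * t) * h' u) -
            ∫ u in Set.Ioc (0:ℝ) t, Real.exp (a * u) * h' u := by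
        rw [← integral_sub hi1 hi2]
        exact setIntegral_congr_fun measurableSet_Ioc fun u _ => by ring
      rw [this, MeasureTheory.integral_const_mul, intervalIntegral.integral_of_le ht,
        intervalIntegral.integral_of_le ht]
    have swap : (∫ s, (∫ u, f (s, u) ∂μ) ∂μ) = ∫ u, (∫ s, f (s, u) ∂μ) ∂μ :=
      integral_integral_swap (f := fun s u => f (s, u)) hfint
    rw [e1, swap, e2]
  linarith [key]

/-- If `h : [0,∞) → [0,∞)` is absolutely continuous with `h(0) = 0`
(encoded via its a.e. derivative `h'`) and for a.e. `t ≥ 0`,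
`h'(t) ≤ -a·h(t) + 2b·√(h(t))·√(g(t)) + b·g(t)` with `a ≥ 0`, `b > 0` and
`g : [0,∞) → [0,∞)` continuous, then
`h(t) ≤ b·e^{-at}·(2 + 8bt)·∫₀ᵗ e^{as} g(s) ds` for all `t ≥ 0`. -/
theorem stmt12 (h h' g : ℝ → ℝ) (a b : ℝ) (ha : 0 ≤ a) (hb : 0 < b)
    (hgc : ContinuousOn g (Set.Ici (0 : ℝ))) (hgnn : ∀ t, 0 ≤ t → 0 ≤ g t)
    (hh0 : h 0 = 0) (hhnn : ∀ t, 0 ≤ t → 0 ≤ h t)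
    (hint : ∀ t, 0 ≤ t → IntervalIntegrable h' volume 0 t)
    (hFTC : ∀ t, 0 ≤ t → h t = ∫ s in (0 : ℝ)..t, h' s)
    (hineq : ∀ᵐ t ∂(volume.restrict (Set.Ici (0 : ℝ))),
      h' t ≤ -a * h t + 2 * b * Real.sqrt (h t) * Real.sqrt (g t) + b * g t) :
    ∀ t, 0 ≤ t →
      h t ≤ b * Real.exp (-a * t) * (2 + 8 * b * t) *
        ∫ s in (0 : ℝ)..t, Real.exp (a * s) * g s := by
  intro T hT
  rcases hT.eq_or_lt with rfl | hTpos
  · simp [hh0.symm ▸ le_refl (0:ℝ), hh0]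
  have hT : (0:ℝ) ≤ T := hTpos.le
  -- continuity of `h` and of exp-weighted versions on `[0, T]`
  have hexp_cont : ∀ r : ℝ, Continuous (fun s : ℝ => Real.exp (r * s)) := fun r =>
    Real.continuous_exp.comp (continuous_const.mul continuous_id)
  have hhc : ContinuousOn h (Set.Icc 0 T) := by
    have h1 : ContinuousOn (fun x => ∫ s in (0:ℝ)..x, h' s) (Set.uIcc 0 T) :=
      intervalIntegral.continuousOn_primitive_interval' (hint T hT) Set.left_mem_uIcc
    rw [Set.uIcc_of_le hT] at h1
    exact h1.congr fun x hx => hFTC x hx.1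
  have hgc' : ContinuousOn g (Set.Icc 0 T) := hgc.mono fun x hx => hx.1
  have hHc : ContinuousOn (fun s => Real.exp (a*s) * h s) (Set.Icc 0 T) :=
    (hexp_cont a).continuousOn.mul hhc
  have hGc : ContinuousOn (fun s => Real.exp (a*s) * g s) (Set.Icc 0 T) :=
    (hexp_cont a).continuousOn.mul hgc'
  -- interval integrability on subintervals of [0,T]
  have hHint : ∀ u v : ℝ, u ∈ Set.Icc (0:ℝ) T → v ∈ Set.Icc (0:ℝ) T →
      IntervalIntegrable (fun s => Real.exp (a*s) * h s) volume u v := by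
    intro u v hu hv
    exact (hHc.mono (Set.uIcc_subset_Icc hu hv)).intervalIntegrable
  have hGint : ∀ u v : ℝ, u ∈ Set.Icc (0:ℝ) T → v ∈ Set.Icc (0:ℝ) T →
      IntervalIntegrable (fun s => Real.exp (a*s) * g s) volume u v := by
    intro u v hu hv
    exact (hGc.mono (Set.uIcc_subset_Icc hu hv)).intervalIntegrable
  set c : ℝ := 2*T*b^2 + b with hc
  have hcpos : 0 < c := by positivity
  -- a.e. linear differential inequality after AM–GM
  have hae : ∀ᵐ s ∂(volume.restrict (Set.Ici (0 : ℝ))),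
      s ∈ Set.Ici (0:ℝ) → h' s ≤ -a * h s + (1/(2*T)) * h s + c * g s := by
    filter_upwards [hineq] with s hs hsmem
    have hsmem' : (0:ℝ) ≤ s := hsmem
    have e1 : Real.sqrt (h s) ^ 2 = h s := Real.sq_sqrt (hhnn s hsmem')
    have e2 : Real.sqrt (g s) ^ 2 = g s := Real.sq_sqrt (hgnn s hsmem')
    have key : 0 ≤ (Real.sqrt (h s) - 2*T*b*Real.sqrt (g s))^2 := sq_nonneg _
    have expand : (Real.sqrt (h s) - 2*T*b*Real.sqrt (g s))^2
        = Real.sqrt (h s)^2 - 4*T*b*(Real.sqrt (h s)*Real.sqrt (g s))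
          + 4*T^2*b^2*Real.sqrt (g s)^2 := by ring
    rw [expand, e1, e2] at key
    have h2 : 2*T*(2 * b * Real.sqrt (h s) * Real.sqrt (g s)) ≤ h s + 4*T^2*b^2*g s := by
      linarith
    have hK : (0:ℝ) < 2*T := by positivity
    have h3 : 2 * b * Real.sqrt (h s) * Real.sqrt (g s) ≤ (1/(2*T)) * h s + 2*T*b^2 * g s := by
      refine le_of_mul_le_mul_left ?_ hK
      have e3 : 2*T*((1/(2*T)) * h s + 2*T*b^2*g s) = h s + 4*T^2*b^2*g s := by
        field_simp; ring
      rw [e3]; exact h2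
    have hg0 : 0 ≤ g s := hgnn s hsmem'
    have : 2*T*b^2 * g s ≤ c * g s := by
      rw [hc]; nlinarith
    linarith
  -- the integrated inequality
  have star : ∀ t ∈ Set.Icc (0:ℝ) T,
      Real.exp (a*t) * h t ≤ (1/(2*T)) * (∫ s in (0:ℝ)..t, Real.exp (a*s) * h s)
        + c * ∫ s in (0:ℝ)..t, Real.exp (a*s) * g s := by
    intro t htmem
    obtain ⟨ht0, htT⟩ := htmem
    have htIcc : t ∈ Set.Icc (0:ℝ) T := ⟨ht0, htT⟩
    have h0Icc : (0:ℝ) ∈ Set.Icc (0:ℝ) T := ⟨le_refl _, hT⟩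
    have hintt := hint t ht0
    have ibp := stmt12_ibp h' a t ha ht0 hintt
    have hinner : (∫ s in (0:ℝ)..t, Real.exp (a*s) * ∫ u in (0:ℝ)..s, h' u)
        = ∫ s in (0:ℝ)..t, Real.exp (a*s) * h s := by
      apply intervalIntegral.integral_congr
      intro s hs
      rw [Set.uIcc_of_le ht0] at hs
      show Real.exp (a*s) * (∫ u in (0:ℝ)..s, h' u) = Real.exp (a*s) * h s
      rw [← hFTC s hs.1]
    rw [hinner, ← hFTC t ht0] at ibp
    -- bound the first integral
    have hEh' : IntervalIntegrable (fun u => Real.exp (a*u) * h' u) volume 0 t := by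
      have hc' : ContinuousOn (fun u : ℝ => Real.exp (a * u)) (Set.uIcc 0 t) :=
        (hexp_cont a).continuousOn
      exact hintt.continuousOn_mul hc'
    have hRHSint : IntervalIntegrable
        (fun u => Real.exp (a*u) * (-a * h u + (1/(2*T)) * h u + c * g u)) volume 0 t := by
      apply ContinuousOn.intervalIntegrable
      rw [Set.uIcc_of_le ht0]
      refine ((hexp_cont a).continuousOn).mul ?_
      have hsub : Set.Icc (0:ℝ) t ⊆ Set.Icc (0:ℝ) T := Set.Icc_subset_Icc le_rfl htT
      exact (((hhc.mono hsub).const_smul (-a)).add ((hhc.mono hsub).const_smul (1/(2*T)))).add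
        ((hgc'.mono hsub).const_smul c)
    have hmono : (∫ u in (0:ℝ)..t, Real.exp (a*u) * h' u)
        ≤ ∫ u in (0:ℝ)..t, Real.exp (a*u) * (-a * h u + (1/(2*T)) * h u + c * g u) := by
      apply intervalIntegral.integral_mono_ae_restrict ht0 hEh' hRHSint
      have hsub : Set.Icc (0:ℝ) t ⊆ Set.Ici (0:ℝ) := fun x hx => hx.1
      have hae' := ae_restrict_of_ae_restrict_of_subset hsub hae
      filter_upwards [hae', ae_restrict_mem measurableSet_Icc] with u hu humem
      have := hu humem.1
      have hep : 0 ≤ Real.exp (a*u) := (Real.exp_pos _).le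
      exact mul_le_mul_of_nonneg_left this hep
    -- split the right-hand side
    have hEh : IntervalIntegrable (fun s => Real.exp (a*s) * h s) volume 0 t :=
      hHint 0 t h0Icc htIcc
    have hEg : IntervalIntegrable (fun s => Real.exp (a*s) * g s) volume 0 t :=
      hGint 0 t h0Icc htIcc
    have hsplit : (∫ u in (0:ℝ)..t, Real.exp (a*u) * (-a * h u + (1/(2*T)) * h u + c * g u))
        = (-a) * (∫ s in (0:ℝ)..t, Real.exp (a*s) * h s)
          + (1/(2*T)) * (∫ s in (0:ℝ)..t, Real.exp (a*s) * h s)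
          + c * (∫ s in (0:ℝ)..t, Real.exp (a*s) * g s) := by
      rw [← intervalIntegral.integral_const_mul, ← intervalIntegral.integral_const_mul,
        ← intervalIntegral.integral_const_mul,
        ← intervalIntegral.integral_add (hEh.const_mul _) (hEh.const_mul _),
        ← intervalIntegral.integral_add ((hEh.const_mul _).add (hEh.const_mul _))
          (hEg.const_mul _)]
      apply intervalIntegral.integral_congr
      intro s _
      ring
    rw [hsplit] at hmono
    linarith [ibp, hmono]
  -- maximum of H on [0,T]
  obtain ⟨t₀, ht₀mem, hmax⟩ := isCompact_Icc.exists_isMaxOn (Set.nonempty_Icc.mpr hT) hHc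
  set S : ℝ := Real.exp (a*t₀) * h t₀ with hS
  have hS0 : 0 ≤ S := by
    have := hmax (Set.left_mem_Icc.mpr hT)
    simpa [hh0] using this
  have h0Icc : (0:ℝ) ∈ Set.Icc (0:ℝ) T := ⟨le_refl _, hT⟩
  have h1 : (∫ s in (0:ℝ)..t₀, Real.exp (a*s) * h s) ≤ t₀ * S := by
    have h1' := intervalIntegral.integral_mono_on ht₀mem.1
      (hHint 0 t₀ h0Icc ht₀mem) (intervalIntegrable_const (c := S))
      (fun x hx => hmax ⟨hx.1, hx.2.trans ht₀mem.2⟩)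
    rw [intervalIntegral.integral_const, smul_eq_mul, sub_zero] at h1'
    exact h1'
  have hIT0 : 0 ≤ ∫ s in (0:ℝ)..T, Real.exp (a*s) * g s := by
    apply intervalIntegral.integral_nonneg hT
    intro u hu
    exact mul_nonneg (Real.exp_pos _).le (hgnn u hu.1)
  have h2 : (∫ s in (0:ℝ)..t₀, Real.exp (a*s) * g s) ≤ ∫ s in (0:ℝ)..T, Real.exp (a*s) * g s := by
    have hTIcc : T ∈ Set.Icc (0:ℝ) T := ⟨hT, le_refl _⟩
    rw [← intervalIntegral.integral_add_adjacent_intervals (hGint 0 t₀ h0Icc ht₀mem)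
      (hGint t₀ T ht₀mem hTIcc)]
    have : 0 ≤ ∫ s in t₀..T, Real.exp (a*s) * g s := by
      apply intervalIntegral.integral_nonneg ht₀mem.2
      intro u hu
      exact mul_nonneg (Real.exp_pos _).le (hgnn u (ht₀mem.1.trans hu.1))
    linarith
  set I : ℝ := ∫ s in (0:ℝ)..T, Real.exp (a*s) * g s with hI
  have hSle : S ≤ 2 * (c * I) := by
    have hstar : S ≤ (1/(2*T)) * (∫ s in (0:ℝ)..t₀, Real.exp (a*s) * h s)
        + c * ∫ s in (0:ℝ)..t₀, Real.exp (a*s) * g s := star t₀ ht₀mem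
    have e1 : (1/(2*T)) * (∫ s in (0:ℝ)..t₀, Real.exp (a*s) * h s) ≤ (1/(2*T)) * (t₀ * S) :=
      mul_le_mul_of_nonneg_left h1 (by positivity)
    have e2 : (1/(2*T)) * (t₀ * S) ≤ S/2 := by
      have h3 : t₀ * S ≤ T * S := mul_le_mul_of_nonneg_right ht₀mem.2 hS0
      have h4 : (1/(2*T)) * (t₀ * S) ≤ (1/(2*T)) * (T * S) :=
        mul_le_mul_of_nonneg_left h3 (by positivity)
      have h5 : (1/(2*T)) * (T * S) = S/2 := by field_simp
      linarith
    have e3 : c * (∫ s in (0:ℝ)..t₀, Real.exp (a*s) * g s) ≤ c * I :=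
      mul_le_mul_of_nonneg_left h2 hcpos.le
    have step : S ≤ S/2 + c*I := le_trans hstar (add_le_add (e1.trans e2) e3)
    clear_value S I c
    linarith
  -- conclude
  have hHT : Real.exp (a*T) * h T ≤ S := hmax (Set.right_mem_Icc.mpr hT)
  have hfin : h T = Real.exp (-a*T) * (Real.exp (a*T) * h T) := by
    rw [← mul_assoc, ← Real.exp_add]
    simp
  calc h T = Real.exp (-a*T) * (Real.exp (a*T) * h T) := hfin
    _ ≤ Real.exp (-a*T) * (2*(c*I)) := by
        apply mul_le_mul_of_nonneg_left (hHT.trans hSle) (Real.exp_pos _).le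
    _ ≤ b * Real.exp (-a * T) * (2 + 8 * b * T) * I := by
        have hE : 0 < Real.exp (-a*T) := Real.exp_pos _
        have : 2*c ≤ b * (2 + 8*b*T) := by rw [hc]; nlinarith
        nlinarith [mul_nonneg hE.le hIT0, mul_nonneg (mul_nonneg hE.le hIT0)
          (by positivity : (0:ℝ) ≤ 4*b^2*T)]
end
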